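/- The infinitesimal holonomy Lie algebra at a point σ of the holonomy bundle equals the image under the connection form of the Lie algebra generated by horizontal vector fields: g'(σ) = ω_σ(h(σ)), where h(σ) denotes the set of values at σ of vector fields in the Lie algebra generated by horizontal vector fields. -/

import Mathlib

/-- the infinitesimal holonomy Lie algebra at a point `σ` of the holonomy
bundle equals the image under the connection form of the Lie algebra generated by the
horizontal vector fields: `g'(σ) = ω_σ(h(σ))`.

Vector fields on the bundle `P` form an abstract real Lie algebra `VF`; the connection
form `ω` assigns to a vector field a `𝔤`-valued function on `P`; `act X` differentiates
such functions along `X`; `Ω` is the curvature; `g'(σ)` is the span of all values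
`(U_k ⋯ U_1 Ω(X,Y))(σ)` with the `U_i, X, Y` horizontal; `h(σ)` is the set of values at
`σ` (here, the image under `ω_σ = eval σ ∘ ω`) of the Lie algebra of vector fields
generated by the horizontal fields. -/
theorem infinitesimal_holonomy_eq_connection_image_of_horizontal_lie_algebra
    (P 𝔤 VF : Type*) [LieRing 𝔤] [LieAlgebra ℝ 𝔤] [LieRing VF] [LieAlgebra ℝ VF]
    (ω : VF →ₗ[ℝ] (P → 𝔤)) (Ω dω : VF → VF → P → 𝔤)
    (act : VF → (P → 𝔤) →ₗ[ℝ] (P → 𝔤))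
    (horiz : VF → Prop) (hproj v : VF → VF)
    -- structural equation Ω = dω + ω∧ω (pointwise bracket on 𝔤-valued functions)
    (hstruct : ∀ X Y, Ω X Y = dω X Y + fun p => ⁅ω X p, ω Y p⁆)
    -- intrinsic formula for dω
    (hdω : ∀ X Y, dω X Y = act X (ω Y) - act Y (ω X) - ω ⁅X, Y⁆)
    -- ω is vertical, vanishing on horizontal fields
    (hω_horiz : ∀ X, horiz X → ω X = 0)
    (hω_vproj : ∀ Z, ω (v Z) = ω Z)
    -- decomposition into horizontal and vertical parts
    (hdecomp : ∀ Z, hproj Z + v Z = Z)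
    (h_hproj : ∀ Z, horiz (hproj Z))
    -- Ω is horizontal: it vanishes on vertical parts
    (hΩ_horiz : ∀ X Z, Ω X (v Z) = 0 ∧ Ω (v Z) X = 0)
    (σ : P) :
    Submodule.span ℝ
        { w : 𝔤 | ∃ (Us : List VF) (X Y : VF), (∀ U ∈ Us, horiz U) ∧ horiz X ∧ horiz Y ∧
            w = (Us.foldr (fun U f => act U f) (Ω X Y)) σ }
      = Submodule.map ((LinearMap.proj σ : (P → 𝔤) →ₗ[ℝ] 𝔤).comp ω)
          (LieSubalgebra.lieSpan ℝ VF { U | horiz U }).toSubmodule := by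
  -- combined structural equation
  have hcomb : ∀ X Y, Ω X Y
      = act X (ω Y) - act Y (ω X) - ω ⁅X, Y⁆ + fun p => ⁅ω X p, ω Y p⁆ := by
    intro X Y; rw [hstruct, hdω]
  -- key1 : for horizontal X Y, ω⁅X,Y⁆ = -Ω X Y
  have key1 : ∀ X Y, horiz X → horiz Y → ω ⁅X, Y⁆ = -Ω X Y := by
    intro X Y hX hY
    have h := hcomb X Y
    rw [hω_horiz X hX, hω_horiz Y hY] at h
    funext p
    have hp := congrFun h p
    simp only [map_zero, Pi.add_apply, Pi.sub_apply, Pi.zero_apply, zero_lie, lie_zero,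
      Pi.neg_apply, zero_sub, sub_zero, neg_zero, zero_add, add_zero] at hp ⊢
    simp [hp]
  -- key2 : for horizontal U, ω⁅U, v Z⁆ = act U (ω Z)
  have key2 : ∀ U Z, horiz U → ω ⁅U, v Z⁆ = act U (ω Z) := by
    intro U Z hU
    have h := hcomb U (v Z)
    rw [hω_horiz U hU, hω_vproj Z, (hΩ_horiz U Z).1] at h
    funext p
    have hp := congrFun h p
    simp only [map_zero, Pi.add_apply, Pi.sub_apply, Pi.zero_apply, zero_lie, lie_zero,
      zero_sub, sub_zero, neg_zero, zero_add, add_zero] at hp ⊢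
    exact (sub_eq_zero.mp hp.symm).symm
  -- splitting of brackets
  have hsplit : ∀ U Z : VF, (⁅U, Z⁆ : VF) = ⁅U, hproj Z⁆ + ⁅U, v Z⁆ := by
    intro U Z; rw [← lie_add, hdecomp]
  -- key4 : for horizontal U, act U (ω Z) = ω (⁅U,Z⁆ - ⁅U, hproj Z⁆)
  have key4 : ∀ U Z, horiz U → act U (ω Z) = ω (⁅U, Z⁆ - ⁅U, hproj Z⁆) := by
    intro U Z hU
    rw [map_sub, hsplit U Z, map_add, key2 U Z hU]
    abel
  -- the span of the generating functions (not just their values at σ)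
  set Fs : Set (P → 𝔤) := { f | ∃ (Us : List VF) (X Y : VF), (∀ U ∈ Us, horiz U) ∧
      horiz X ∧ horiz Y ∧ f = Us.foldr (fun U f => act U f) (Ω X Y) } with hFs
  set N : Submodule ℝ (P → 𝔤) := Submodule.span ℝ Fs with hN
  have ΩN : ∀ X Y, horiz X → horiz Y → Ω X Y ∈ N :=
    fun X Y hX hY => Submodule.subset_span ⟨[], X, Y, by simp, hX, hY, rfl⟩
  -- act by a horizontal field preserves N
  have actN : ∀ U, horiz U → ∀ f ∈ N, act U f ∈ N := by
    intro U hU f hf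
    refine Submodule.span_induction (p := fun f _ => act U f ∈ N)
      (fun g hg => ?_) (by simp) (fun a b _ _ ha hb => ?_) (fun c a _ ha => ?_) hf
    · obtain ⟨Us, X, Y, hUs, hX, hY, rfl⟩ := hg
      refine Submodule.subset_span ⟨U :: Us, X, Y, ?_, hX, hY, rfl⟩
      intro W hW
      rcases List.mem_cons.mp hW with h | h
      · exact h ▸ hU
      · exact hUs W h
    · show act U (a + b) ∈ N
      rw [map_add]; exact N.add_mem ha hb
    · show act U (c • a) ∈ N
      rw [map_smul]; exact N.smul_mem c ha
  -- horizontal fields are in the "good" set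
  have horizGood : ∀ U, horiz U →
      ω U ∈ N ∧ ∀ W, ω W ∈ N → ω ⁅U, W⁆ ∈ N := by
    intro U hU
    refine ⟨by rw [hω_horiz U hU]; exact N.zero_mem, fun W hW => ?_⟩
    rw [hsplit U W, map_add]
    refine N.add_mem ?_ ?_
    · rw [key1 U (hproj W) hU (h_hproj W)]
      exact N.neg_mem (ΩN U (hproj W) hU (h_hproj W))
    · rw [key2 U W hU]
      exact actN U hU _ hW
  -- the good set is a Lie subalgebra
  let S : LieSubalgebra ℝ VF :=
    { carrier := {Z | ω Z ∈ N ∧ ∀ W, ω W ∈ N → ω ⁅Z, W⁆ ∈ N}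
      add_mem' := by
        rintro a b ⟨ha1, ha2⟩ ⟨hb1, hb2⟩
        refine ⟨by rw [map_add]; exact N.add_mem ha1 hb1, fun W hW => ?_⟩
        rw [add_lie, map_add]
        exact N.add_mem (ha2 W hW) (hb2 W hW)
      zero_mem' := by
        refine ⟨by rw [map_zero]; exact N.zero_mem, fun W hW => ?_⟩
        rw [zero_lie, map_zero]; exact N.zero_mem
      smul_mem' := by
        rintro c a ⟨ha1, ha2⟩
        refine ⟨by rw [map_smul]; exact N.smul_mem c ha1, fun W hW => ?_⟩
        rw [smul_lie, map_smul]
        exact N.smul_mem c (ha2 W hW)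
      lie_mem' := by
        rintro a b ⟨ha1, ha2⟩ ⟨hb1, hb2⟩
        refine ⟨ha2 b hb1, fun W hW => ?_⟩
        rw [lie_lie, map_sub]
        exact N.sub_mem (ha2 _ (hb2 W hW)) (hb2 _ (ha2 W hW)) }
  have hle : LieSubalgebra.lieSpan ℝ VF { U | horiz U } ≤ S :=
    LieSubalgebra.lieSpan_le.mpr (fun U hU => horizGood U hU)
  -- evaluation at σ maps N into the LHS span
  set M : Submodule ℝ 𝔤 := Submodule.span ℝ
      { w : 𝔤 | ∃ (Us : List VF) (X Y : VF), (∀ U ∈ Us, horiz U) ∧ horiz X ∧ horiz Y ∧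
          w = (Us.foldr (fun U f => act U f) (Ω X Y)) σ } with hM
  have evalM : ∀ f ∈ N, f σ ∈ M := by
    intro f hf
    refine Submodule.span_induction (p := fun f _ => f σ ∈ M)
      (fun g hg => ?_) (by simpa using M.zero_mem)
      (fun a b _ _ ha hb => ?_) (fun c a _ ha => ?_) hf
    · obtain ⟨Us, X, Y, h1, h2, h3, rfl⟩ := hg
      exact Submodule.subset_span ⟨Us, X, Y, h1, h2, h3, rfl⟩
    · show (a + b) σ ∈ _
      simpa using Submodule.add_mem _ ha hb
    · show (c • a) σ ∈ _
      simpa using Submodule.smul_mem _ c ha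
  have memSpan : ∀ W, horiz W → W ∈ LieSubalgebra.lieSpan ℝ VF { U | horiz U } :=
    fun W hW => LieSubalgebra.subset_lieSpan hW
  refine le_antisymm ?_ ?_
  · -- LHS ≤ RHS
    rw [Submodule.span_le]
    rintro w ⟨Us, X, Y, hUs, hX, hY, rfl⟩
    have main : ∀ (Us : List VF), (∀ U ∈ Us, horiz U) →
        ∃ Z ∈ LieSubalgebra.lieSpan ℝ VF { U | horiz U },
          Us.foldr (fun U f => act U f) (Ω X Y) = ω Z := by
      intro Us
      induction Us with
      | nil =>
        intro _
        refine ⟨-⁅X, Y⁆, ?_, ?_⟩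
        · exact neg_mem (LieSubalgebra.lie_mem _ (memSpan X hX)
            (memSpan Y hY))
        · rw [List.foldr_nil, map_neg, key1 X Y hX hY, neg_neg]
      | cons U Us ih =>
        intro hAll
        obtain ⟨Z, hZ, hE⟩ := ih (fun W hW => hAll W (List.mem_cons_of_mem U hW))
        have hU : horiz U := hAll U List.mem_cons_self
        refine ⟨⁅U, Z⁆ - ⁅U, hproj Z⁆, ?_, ?_⟩
        · refine sub_mem (LieSubalgebra.lie_mem _ (memSpan U hU) hZ)
            (LieSubalgebra.lie_mem _ (memSpan U hU) (memSpan (hproj Z) (h_hproj Z)))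
        · show act U (Us.foldr (fun U f => act U f) (Ω X Y)) = _
          rw [hE, key4 U Z hU]
    obtain ⟨Z, hZ, hE⟩ := main Us hUs
    exact ⟨Z, hZ, by rw [LinearMap.comp_apply, ← hE]; rfl⟩
  · -- RHS ≤ LHS
    rintro w ⟨Z, hZ, rfl⟩
    have hωZ : ω Z ∈ N := (hle hZ).1
    exact evalM (ω Z) hωZ
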